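/- Let N be a proper unrooted phylogenetic network with at least two leaves that is binary (every internal vertex has degree 3) and chordal. Then N is edgebased. -/

import Mathlib

/-- A finite multigraph (loops and parallel edges allowed) on vertex type `V`. -/
structure MGraph (V : Type) [DecidableEq V] where
  verts : Finset V
  edges : Multiset (Sym2 V)

namespace MGraph

variable {V : Type} [DecidableEq V]

/-- All endpoints of edges are vertices. -/
def Good (G : MGraph V) : Prop := ∀ e ∈ G.edges, ∀ v ∈ e, v ∈ G.verts

/-- Degree of a vertex: loops count twice. -/
def degree (G : MGraph V) (v : V) : ℕ :=
  (G.edges.map fun e => if e = s(v, v) then 2 else if v ∈ e then 1 else 0).sum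

def Adj (G : MGraph V) (u v : V) : Prop := s(u, v) ∈ G.edges

def ConnectedM (G : MGraph V) : Prop :=
  G.verts.Nonempty ∧ ∀ u ∈ G.verts, ∀ v ∈ G.verts, Relation.ReflTransGen G.Adj u v

/-- The restriction operations of Algorithm 1: delete a leaf, suppress a degree-2
vertex (both only allowed while more than 2 vertices remain), delete one copy of a
parallel (non-loop) edge, delete a loop. -/
inductive Step : MGraph V → MGraph V → Prop
  | deleteLeaf (G : MGraph V) (v : V) (e : Sym2 V) :
      2 < G.verts.card → v ∈ G.verts → G.degree v = 1 → e ∈ G.edges → v ∈ e →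
      Step G ⟨G.verts.erase v, G.edges.erase e⟩
  | suppress (G : MGraph V) (v u w : V) (rest : Multiset (Sym2 V)) :
      2 < G.verts.card → v ∈ G.verts → G.degree v = 2 → u ≠ v → w ≠ v →
      G.edges = s(u, v) ::ₘ s(v, w) ::ₘ rest →
      Step G ⟨G.verts.erase v, s(u, w) ::ₘ rest⟩
  | deleteParallel (G : MGraph V) (e : Sym2 V) :
      ¬ e.IsDiag → 2 ≤ G.edges.count e →
      Step G ⟨G.verts, G.edges.erase e⟩
  | deleteLoop (G : MGraph V) (v : V) :
      s(v, v) ∈ G.edges →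
      Step G ⟨G.verts, G.edges.erase s(v, v)⟩

/-- The same operations but without loop deletion (GSP reduction). -/
inductive StepGSP : MGraph V → MGraph V → Prop
  | deleteLeaf (G : MGraph V) (v : V) (e : Sym2 V) :
      2 < G.verts.card → v ∈ G.verts → G.degree v = 1 → e ∈ G.edges → v ∈ e →
      StepGSP G ⟨G.verts.erase v, G.edges.erase e⟩
  | suppress (G : MGraph V) (v u w : V) (rest : Multiset (Sym2 V)) :
      2 < G.verts.card → v ∈ G.verts → G.degree v = 2 → u ≠ v → w ≠ v →
      G.edges = s(u, v) ::ₘ s(v, w) ::ₘ rest →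
      StepGSP G ⟨G.verts.erase v, s(u, w) ::ₘ rest⟩
  | deleteParallel (G : MGraph V) (e : Sym2 V) :
      ¬ e.IsDiag → 2 ≤ G.edges.count e →
      StepGSP G ⟨G.verts, G.edges.erase e⟩

/-- Only series (suppression) and parallel (parallel-edge deletion) reductions. -/
inductive StepSP : MGraph V → MGraph V → Prop
  | suppress (G : MGraph V) (v u w : V) (rest : Multiset (Sym2 V)) :
      2 < G.verts.card → v ∈ G.verts → G.degree v = 2 → u ≠ v → w ≠ v →
      G.edges = s(u, v) ::ₘ s(v, w) ::ₘ rest →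
      StepSP G ⟨G.verts.erase v, s(u, w) ::ₘ rest⟩
  | deleteParallel (G : MGraph V) (e : Sym2 V) :
      ¬ e.IsDiag → 2 ≤ G.edges.count e →
      StepSP G ⟨G.verts, G.edges.erase e⟩

/-- Being the graph `K2`: two vertices joined by a single edge. -/
def IsK2 (G : MGraph V) : Prop :=
  ∃ u v : V, u ≠ v ∧ G.verts = {u, v} ∧ G.edges = {s(u, v)}

/-- `G` has `K2` as a restricted topological subgraph. -/
def Reduces (G : MGraph V) : Prop :=
  ∃ H : MGraph V, Relation.ReflTransGen Step G H ∧ IsK2 H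

def ReducesGSP (G : MGraph V) : Prop :=
  ∃ H : MGraph V, Relation.ReflTransGen StepGSP G H ∧ IsK2 H

def ReducesSP (G : MGraph V) : Prop :=
  ∃ H : MGraph V, Relation.ReflTransGen StepSP G H ∧ IsK2 H

end MGraph

/-- The multigraph associated to a finite simple graph. -/
noncomputable def SimpleGraph.toMGraph {V : Type} [DecidableEq V] [Fintype V]
    (G : SimpleGraph V) : MGraph V :=
  ⟨Finset.univ, (Set.toFinite G.edgeSet).toFinset.val⟩

/-- A finite simple graph is edgebased if its multigraph reduces to `K2`. -/
noncomputable def SimpleGraph.Edgebased {V : Type} [DecidableEq V] [Fintype V]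
    (G : SimpleGraph V) : Prop :=
  G.toMGraph.Reduces


/-- A network is proper if removal of any cut edge or any cut vertex leaves
connected components each containing at least one leaf (degree-1 vertex). -/
def SimpleGraph.Proper {V : Type} (G : SimpleGraph V) : Prop :=
  (∀ e : Sym2 V, G.IsBridge e → ∀ w : V, ∃ u : V,
      (G.neighborSet u).ncard = 1 ∧ (G.deleteEdges {e}).Reachable w u) ∧
  (∀ v : V, ¬ (G.induce {u : V | u ≠ v}).Connected →
    ∀ w : ↥{u : V | u ≠ v}, ∃ x : ↥{u : V | u ≠ v},
      (G.neighborSet x.1).ncard = 1 ∧ (G.induce {u : V | u ≠ v}).Reachable w x)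


/-- `G` is chordal: every cycle of length at least four has a chord, i.e. an edge
of `G` joining two vertices of the cycle that is not an edge of the cycle. -/
def SimpleGraph.IsChordal {V : Type*} (G : SimpleGraph V) : Prop :=
  ∀ (v : V) (c : G.Walk v v), c.IsCycle → 4 ≤ c.length →
    ∃ u w : V, u ∈ c.support ∧ w ∈ c.support ∧ G.Adj u w ∧ s(u, w) ∉ c.edges

namespace StmtAux


variable {V : Type} [DecidableEq V] [Fintype V]

open SimpleGraph

def listWalk (G : SimpleGraph V) : ∀ (l : List V) (_ : l.Chain' G.Adj) (hne : l ≠ []),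
    G.Walk (l.head hne) (l.getLast hne)
  | [], _, hne => absurd rfl hne
  | [_], _, _ => Walk.nil
  | x :: y :: t, h, _ =>
    Walk.cons (List.isChain_cons_cons.mp h).1
      ((listWalk G (y :: t) (List.isChain_cons_cons.mp h).2 (by simp)).copy rfl
        (List.getLast_cons (by simp)).symm)

@[simp] lemma support_listWalk (G : SimpleGraph V) :
    ∀ (l : List V) (h : l.Chain' G.Adj) (hne : l ≠ []), (listWalk G l h hne).support = l
  | [], _, hne => absurd rfl hne
  | [x], _, _ => rfl
  | x :: y :: t, h, _ => by
    rw [listWalk]; erw [Walk.support_cons, Walk.support_copy, support_listWalk]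
    simp

@[simp] lemma edges_listWalk (G : SimpleGraph V) :
    ∀ (l : List V) (h : l.Chain' G.Adj) (hne : l ≠ []),
      (listWalk G l h hne).edges = List.zipWith (fun a b => s(a, b)) l l.tail
  | [], _, hne => absurd rfl hne
  | [x], _, _ => rfl
  | x :: y :: t, h, _ => by
    rw [listWalk]; erw [Walk.edges_cons, Walk.edges_copy, edges_listWalk]
    rfl

lemma length_listWalk (G : SimpleGraph V) (l : List V) (h : l.Chain' G.Adj) (hne : l ≠ []) :
    (listWalk G l h hne).length = l.length - 1 := by
  have := support_listWalk G l h hne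
  have h2 := SimpleGraph.Walk.length_support (listWalk G l h hne)
  rw [this] at h2
  omega

lemma mem_edges_listWalk {G : SimpleGraph V} {l : List V} {h : l.Chain' G.Adj} {hne : l ≠ []}
    {e : Sym2 V} (he : e ∈ (listWalk G l h hne).edges) :
    ∃ i : ℕ, ∃ hi : i + 1 < l.length, e = s(l[i], l[i+1]) := by
  rw [edges_listWalk] at he
  rw [List.mem_iff_getElem] at he
  obtain ⟨i, hi, hei⟩ := he
  rw [List.length_zipWith, List.length_tail] at hi
  have hi1 : i + 1 < l.length := by omega
  refine ⟨i, hi1, ?_⟩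
  rw [List.getElem_zipWith] at hei
  rw [← hei]
  congr 1
  rw [List.getElem_tail]

lemma edge_mem_edges_listWalk {G : SimpleGraph V} {l : List V} {h : l.Chain' G.Adj} {hne : l ≠ []}
    {i : ℕ} (hi : i + 1 < l.length) :
    s(l[i], l[i+1]) ∈ (listWalk G l h hne).edges := by
  rw [edges_listWalk, List.mem_iff_getElem]
  refine ⟨i, by simp [List.length_zipWith, List.length_tail]; omega, ?_⟩
  rw [List.getElem_zipWith]
  congr 1
  rw [List.getElem_tail]

/-- Every "open" chordless-candidate situation: an edge together with a disjoint path
joining its endpoints yields a triangle on the edge. -/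
lemma triangle_of_adj_path {G : SimpleGraph V} (hch : G.IsChordal) :
    ∀ (n : ℕ) (l : List V), l.length = n → l.Nodup → (hc : l.Chain' G.Adj) → 3 ≤ l.length →
    ∀ (hne : l ≠ []), G.Adj (l.head hne) (l.getLast hne) →
    ∃ t, t ≠ l.head hne ∧ t ≠ l.getLast hne ∧ G.Adj (l.head hne) t ∧ G.Adj (l.getLast hne) t := by
  intro n
  induction n using Nat.strong_induction_on with
  | _ n IH =>
    intro l hln hnd hc h3 hne hadj
    rcases eq_or_lt_of_le h3 with h3' | h4
    · -- length exactly 3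
      obtain ⟨a, b, c, rfl⟩ := List.length_eq_three.mp h3'.symm
      have hhead : [a,b,c].head hne = a := rfl
      have hlast : [a,b,c].getLast hne = c := by simp
      rw [hhead, hlast]
      refine ⟨b, ?_, ?_, ?_, ?_⟩
      · intro h; subst h; simp at hnd
      · intro h; subst h; simp at hnd
      · exact (List.isChain_cons_cons.mp hc).1
      · exact ((List.isChain_cons_cons.mp (List.isChain_cons_cons.mp hc).2).1).symm
    · -- length ≥ 4 : form the cycle and find a chord
      have h4' : 4 ≤ l.length := h4
      set x := l.head hne with hx
      set y := l.getLast hne with hy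
      have hxy0 : x = l[0] := List.head_eq_getElem hne
      have hyl : y = l[l.length - 1] := List.getLast_eq_getElem hne
      have hw : (listWalk G l hc hne).IsPath := by
        rw [Walk.isPath_def, support_listWalk]; exact hnd
      have hyx : s(x, y) ∉ (listWalk G l hc hne).edges := by
        intro hmem
        obtain ⟨i, hi, hei⟩ := mem_edges_listWalk hmem
        rcases Sym2.eq_iff.mp hei with ⟨h1, h2⟩ | ⟨h1, h2⟩
        · rw [hxy0] at h1
          rw [hyl] at h2
          have e1 := (hnd.getElem_inj_iff).mp h1
          have e2 := (hnd.getElem_inj_iff).mp h2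
          omega
        · rw [hxy0] at h1
          have e1 := (hnd.getElem_inj_iff).mp h1
          omega
      have hcyc : (Walk.cons hadj.symm (listWalk G l hc hne)).IsCycle := by
        rw [Walk.cons_isCycle_iff]
        refine ⟨hw, ?_⟩
        rwa [Sym2.eq_swap] at hyx
      have hclen : 4 ≤ (Walk.cons hadj.symm (listWalk G l hc hne)).length := by
        rw [Walk.length_cons, length_listWalk]; omega
      obtain ⟨a, b, ha, hb, hab, hnin⟩ := hch y _ hcyc hclen
      rw [Walk.support_cons, support_listWalk] at ha hb
      have hal : a ∈ l := by
        rcases List.mem_cons.mp ha with rfl | h; · rw [hy]; exact List.getLast_mem hne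
        · exact h
      have hbl : b ∈ l := by
        rcases List.mem_cons.mp hb with rfl | h; · rw [hy]; exact List.getLast_mem hne
        · exact h
      rw [Walk.edges_cons, List.mem_cons] at hnin
      push_neg at hnin
      obtain ⟨hnin1, hnin2⟩ := hnin
      -- indices
      obtain ⟨ia, hia, haa⟩ := List.mem_iff_getElem.mp hal
      obtain ⟨ib, hib, hbb⟩ := List.mem_iff_getElem.mp hbl
      -- inner claim with i < j
      have inner : ∀ (i j : ℕ) (hi : i < l.length) (hj : j < l.length), i < j →
          G.Adj (l[i]'hi) (l[j]'hj) →
          s(l[i]'hi, l[j]'hj) ≠ s(y, x) → s(l[i]'hi, l[j]'hj) ∉ (listWalk G l hc hne).edges →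
          ∃ t, t ≠ x ∧ t ≠ y ∧ G.Adj x t ∧ G.Adj y t := by
        intro i j hi hj hij hadj' hne1 hnin'
        -- j ≥ i + 2
        have hij2 : i + 2 ≤ j := by
          rcases eq_or_lt_of_le (Nat.succ_le_of_lt hij) with h | h
          · exfalso
            subst h
            exact hnin' (edge_mem_edges_listWalk hj)
          · omega
        -- not both extreme
        have hext : ¬ (i = 0 ∧ j = l.length - 1) := by
          rintro ⟨rfl, rfl⟩
          apply hne1
          rw [← hxy0, ← hyl, Sym2.eq_swap]
        set l' := l.take (i+1) ++ l.drop j with hl'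
        have hlen' : l'.length = (i+1) + (l.length - j) := by
          rw [hl', List.length_append, List.length_take, List.length_drop]
          congr 1
          omega
        have hne' : l' ≠ [] := by
          intro h
          have := congrArg List.length h
          rw [hlen'] at this
          simp at this
        have htke : l.take (i+1) = l.take i ++ [l[i]] := by
          rw [List.take_succ]
          congr 1
          simp [List.getElem?_eq_getElem (by omega : i < l.length)]
        have hdrj : l.drop j = l[j] :: l.drop (j+1) := List.drop_eq_getElem_cons hj
        have hsubl : l'.Sublist l := by
          rw [hl']
          have h1 : (l.drop j).Sublist (l.drop (i+1)) := by
            have hdd : l.drop j = List.drop (j - (i+1)) (l.drop (i+1)) := by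
              rw [List.drop_drop]
              congr 1
              omega
            rw [hdd]
            exact List.drop_sublist _ _
          have h2 := h1.append_left (l.take (i+1))
          rwa [List.take_append_drop] at h2
        have hnd' : l'.Nodup := hsubl.nodup hnd
        have hch' : l'.Chain' G.Adj := by
          rw [hl', List.Chain', List.isChain_append]
          refine ⟨hc.take _, hc.drop _, ?_⟩
          intro p hp q hq
          rw [htke, List.getLast?_concat] at hp
          rw [hdrj] at hq
          simp only [List.head?_cons, Option.mem_some_iff] at hp hq
          rw [← hp, ← hq]
          exact hadj'
        have h0lt : 0 < l'.length := by omega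
        have hhead' : l'.head hne' = x := by
          rw [List.head_eq_getElem]
          rw [List.getElem_of_eq hl' h0lt]
          rw [List.getElem_append_left (by rw [List.length_take]; omega)]
          exact List.getElem_take.trans hxy0.symm
        have hlast' : l'.getLast hne' = y := by
          rw [List.getLast_eq_getElem]
          rw [List.getElem_of_eq hl' (by omega)]
          rw [List.getElem_append_right (by rw [List.length_take]; omega)]
          rw [List.getElem_drop]
          have hidx : j + (l'.length - 1 - (List.take (i + 1) l).length) = l.length - 1 := by
            simp only [List.length_take]
            omega
          simp only [hidx]
          exact hyl.symm
        have h3' : 3 ≤ l'.length := by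
          rw [hlen']
          rcases Nat.eq_or_lt_of_le (Nat.zero_le i) with h0 | h0
          · rcases Nat.lt_or_ge j (l.length - 1) with h1 | h1
            · omega
            · exfalso; exact hext ⟨h0.symm, by omega⟩
          · omega
        have hlt : l'.length < n := by
          rw [hlen']; omega
        have hadjhl : G.Adj (l'.head hne') (l'.getLast hne') := by
          rw [hhead', hlast']; exact hadj
        obtain ⟨t, ht1, ht2, ht3, ht4⟩ :=
          IH l'.length hlt l' rfl hnd' hch' h3' hne' hadjhl
        rw [hhead'] at ht1 ht3
        rw [hlast'] at ht2 ht4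
        exact ⟨t, ht1, ht2, ht3, ht4⟩
      rcases Nat.lt_or_ge ia ib with hlt | hge
      · exact inner ia ib hia hib hlt (by rw [haa, hbb]; exact hab)
          (by rw [haa, hbb]; exact hnin1) (by rw [haa, hbb]; exact hnin2)
      · have hne2 : ia ≠ ib := by
          intro h
          subst h
          exact hab.ne (haa.symm.trans hbb)
        have hlt2 : ib < ia := by omega
        refine inner ib ia hib hia hlt2 (by rw [haa, hbb]; exact hab.symm) ?_ ?_
        · rw [haa, hbb, Sym2.eq_swap]; exact hnin1
        · rw [haa, hbb, Sym2.eq_swap]; exact hnin2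



variable {V : Type} [DecidableEq V] [Fintype V]

open SimpleGraph

/-- contiguous segment `L[i..j]` (inclusive). -/
def seg (L : List V) (i j : ℕ) : List V := (L.take (j+1)).drop i

lemma seg_length {L : List V} {i j : ℕ} (hj : j < L.length) :
    (seg L i j).length = j + 1 - i := by
  rw [seg, List.length_drop, List.length_take]
  omega

lemma seg_ne {L : List V} {i j : ℕ} (hij : i ≤ j) (hj : j < L.length) : seg L i j ≠ [] := by
  intro h
  have := congrArg List.length h
  rw [seg_length hj] at this
  simp at this
  omega

lemma seg_getElem {L : List V} {i j t : ℕ} (hj : j < L.length)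
    (ht : t < (seg L i j).length) : (seg L i j)[t] = L[i + t]'(by rw [seg_length hj] at ht; omega) := by
  simp only [seg]
  rw [List.getElem_drop]
  exact List.getElem_take

lemma seg_head {L : List V} {i j : ℕ} (hij : i ≤ j) (hj : j < L.length) :
    (seg L i j).head (seg_ne hij hj) = L[i]'(by omega) := by
  rw [List.head_eq_getElem, seg_getElem hj]
  simp

lemma seg_getLast {L : List V} {i j : ℕ} (hij : i ≤ j) (hj : j < L.length) :
    (seg L i j).getLast (seg_ne hij hj) = L[j] := by
  rw [List.getLast_eq_getElem, seg_getElem hj]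
  congr 1
  rw [seg_length hj]
  omega

lemma seg_sublist {L : List V} {i j : ℕ} : (seg L i j).Sublist L :=
  ((List.drop_sublist _ _).trans (List.take_sublist _ _))

lemma seg_nodup {L : List V} {i j : ℕ} (h : L.Nodup) : (seg L i j).Nodup :=
  seg_sublist.nodup h

lemma seg_chain {L : List V} {R : V → V → Prop} {i j : ℕ} (h : L.Chain' R) :
    (seg L i j).Chain' R := (h.take _).drop _

lemma mem_seg {L : List V} {i j : ℕ} {x : V} (hx : x ∈ seg L i j) (hj : j < L.length) :
    ∃ t, i ≤ t ∧ t ≤ j ∧ ∃ (h : t < L.length), x = L[t] := by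
  obtain ⟨n, hn, he⟩ := List.mem_iff_getElem.mp hx
  rw [seg_getElem hj] at he
  have hn' := hn
  rw [seg_length hj] at hn'
  exact ⟨i + n, by omega, by omega, by omega, he.symm⟩

lemma chain'_reverse_adj {G : SimpleGraph V} {l : List V} (h : l.Chain' G.Adj) :
    l.reverse.Chain' G.Adj := by
  rw [List.Chain', List.isChain_reverse]
  exact h.imp (fun _ _ h' => h'.symm)

lemma head_reverse' {l : List V} (h : l ≠ []) :
    l.reverse.head (by simpa using h) = l.getLast h := by
  rw [List.head_eq_getElem, List.getLast_eq_getElem, List.getElem_reverse]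
  congr 1

lemma getLast_reverse' {l : List V} (h : l ≠ []) :
    l.reverse.getLast (by simpa using h) = l.head h := by
  rw [List.head_eq_getElem, List.getLast_eq_getElem, List.getElem_reverse]
  congr 1
  simp only [List.length_reverse]
  omega


def MaxDeg3 {V : Type} (G : SimpleGraph V) : Prop :=
  ∀ v a b c d : V, G.Adj v a → G.Adj v b → G.Adj v c → G.Adj v d →
    (a = b ∨ a = c ∨ a = d ∨ b = c ∨ b = d ∨ c = d)

def K4Free {V : Type} (G : SimpleGraph V) : Prop :=
  ∀ a b c d : V, G.Adj a b → G.Adj a c → G.Adj a d → G.Adj b c → G.Adj b d → G.Adj c d → False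

/-- wrapper for the triangle lemma -/
lemma T' {G : SimpleGraph V} (hch : G.IsChordal) (l : List V) (hnd : l.Nodup)
    (hc : l.Chain' G.Adj) (h3 : 3 ≤ l.length) (hne : l ≠ [])
    (hadj : G.Adj (l.head hne) (l.getLast hne)) :
    ∃ t, t ≠ l.head hne ∧ t ≠ l.getLast hne ∧ G.Adj (l.head hne) t ∧ G.Adj (l.getLast hne) t :=
  triangle_of_adj_path hch l.length l rfl hnd hc h3 hne hadj

/-- every chordal graph with max degree 3 and no K4 has, in each component containing
an edge, a vertex of degree 1, or of degree 2 whose neighbours are adjacent -/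
lemma exists_good_vertex {G : SimpleGraph V} (hch : G.IsChordal) (hd3 : MaxDeg3 G)
    (hk4 : K4Free G) (v0 w0 : V) (h0 : G.Adj v0 w0) :
    ∃ v a, G.Reachable v0 v ∧ G.Adj v a ∧
      ((∀ x, G.Adj v x → x = a) ∨
       ∃ b, G.Adj v b ∧ b ≠ a ∧ G.Adj a b ∧ ∀ x, G.Adj v x → x = a ∨ x = b) := by
  classical
  set S : Set ℕ := {n | ∃ l : List V, (l ≠ [] ∧ l.Nodup ∧ l.Chain' G.Adj ∧
      ∀ x ∈ l, G.Reachable v0 x) ∧ l.length = n} with hS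
  have h2S : 2 ∈ S := by
    refine ⟨[v0, w0], ⟨by simp, by simp [h0.ne], by simp [List.Chain', h0], ?_⟩, rfl⟩
    intro x hx
    rcases List.mem_pair.mp hx with rfl | rfl
    · exact Reachable.refl x
    · exact h0.reachable
  have hSne : S.Nonempty := ⟨2, h2S⟩
  have hbdd : BddAbove S := by
    refine ⟨Fintype.card V, ?_⟩
    rintro n ⟨l, ⟨-, hnd, -, -⟩, rfl⟩
    exact hnd.length_le_card
  have hNmem := Nat.sSup_mem hSne hbdd
  set N := sSup S with hNdef
  have h2N : 2 ≤ N := le_csSup hbdd h2S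
  -- maximality: neighbours of the head of a maximum-length good list lie on the list
  have hext : ∀ (l : List V) (hne : l ≠ []), l.Nodup → l.Chain' G.Adj →
      (∀ x ∈ l, G.Reachable v0 x) → l.length = N →
      ∀ x, G.Adj (l.head hne) x → x ∈ l := by
    intro l hne hnd hchn hrch hlen x hadj
    by_contra hx
    have hmem : (x :: l).length ∈ S := by
      refine ⟨x :: l, ⟨by simp, List.nodup_cons.mpr ⟨hx, hnd⟩, ?_, ?_⟩, rfl⟩
      · refine List.isChain_cons.mpr ⟨?_, hchn⟩
        intro y hy
        rw [List.head?_eq_head hne] at hy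
        rw [Option.mem_some_iff] at hy
        rw [← hy]
        exact hadj.symm
      · intro z hz
        rcases List.mem_cons.mp hz with rfl | hz'
        · exact (hrch _ (List.head_mem hne)).trans hadj.reachable
        · exact hrch _ hz'
    have := le_csSup hbdd hmem
    rw [List.length_cons, hlen] at this
    omega
  obtain ⟨L, ⟨hneL, hndL, hchnL, hrchL⟩, hlenL⟩ := hNmem
  have hIdx : ∀ {i j : ℕ} (hi : i < L.length) (hj : j < L.length),
      L[i]'hi = L[j]'hj → i = j := fun {i j} hi hj h => (hndL.getElem_inj_iff).mp h
  have h0lt : 0 < L.length := by omega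
  have h1lt : 1 < L.length := by omega
  have hchainIdx : ∀ (i : ℕ) (h : i + 1 < L.length), G.Adj (L[i]'(by omega)) (L[i+1]'h) := by
    intro i h
    have := List.isChain_iff_getElem.mp hchnL i (by omega)
    simpa using this
  set x0 := L[0]'h0lt with hx0
  set v1 := L[1]'h1lt with hv1
  have hadj01 : G.Adj x0 v1 := hchainIdx 0 h1lt
  have hheadL : L.head hneL = x0 := List.head_eq_getElem hneL
  have hreach : ∀ (i : ℕ) (h : i < L.length), G.Reachable v0 (L[i]'h) :=
    fun i h => hrchL _ (List.getElem_mem h)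
  have hnbrIdx : ∀ x, G.Adj x0 x → ∃ (m : ℕ) (hm : m < L.length), 1 ≤ m ∧ x = L[m]'hm := by
    intro x hx
    have hxL : x ∈ L := by
      refine hext L hneL hndL hchnL hrchL hlenL x ?_
      rw [hheadL]
      exact hx
    obtain ⟨m, hm, he⟩ := List.mem_iff_getElem.mp hxL
    refine ⟨m, hm, ?_, he.symm⟩
    rcases Nat.eq_or_lt_of_le (Nat.zero_le m) with h | h
    · exfalso
      subst h
      exact hx.ne' (he.symm.trans hx0.symm)
    · omega
  by_cases hdeg1 : ∀ x, G.Adj x0 x → x = v1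
  · exact ⟨x0, v1, hreach 0 h0lt, hadj01, Or.inl hdeg1⟩
  push_neg at hdeg1
  obtain ⟨va, hva, hvane⟩ := hdeg1
  obtain ⟨m2, hm2lt, hm2ge, hva2⟩ := hnbrIdx va hva
  have hm2ge2 : 2 ≤ m2 := by
    rcases Nat.eq_or_lt_of_le hm2ge with h | h
    · exfalso; subst h; exact hvane (hva2.trans hv1.symm)
    · omega
  by_cases hdeg2 : ∀ x, G.Adj x0 x → x = v1 ∨ x = va
  · -- degree two: the two neighbours must be adjacent (via a triangle on edge x0v1)
    have hsegne : seg L 1 m2 ≠ [] := seg_ne (by omega) hm2lt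
    have hrevne : (seg L 1 m2).reverse ≠ [] := by simpa using hsegne
    have hPne : (x0 :: (seg L 1 m2).reverse) ≠ [] := by simp
    have hPhead : (x0 :: (seg L 1 m2).reverse).head hPne = x0 := rfl
    have hPlast : (x0 :: (seg L 1 m2).reverse).getLast hPne = v1 := by
      rw [List.getLast_cons hrevne, getLast_reverse' hsegne, seg_head (by omega) hm2lt]
    have hPnd : (x0 :: (seg L 1 m2).reverse).Nodup := by
      rw [List.nodup_cons]
      refine ⟨?_, List.nodup_reverse.mpr (seg_nodup hndL)⟩
      intro hmem
      obtain ⟨t, ht1, ht2, ht3, hte⟩ := mem_seg (List.mem_reverse.mp hmem) hm2lt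
      have := hIdx h0lt ht3 (by rw [← hte])
      omega
    have hPch : (x0 :: (seg L 1 m2).reverse).Chain' G.Adj := by
      refine List.isChain_cons.mpr ⟨?_, chain'_reverse_adj (seg_chain hchnL)⟩
      intro y hy
      rw [List.head?_eq_head hrevne, Option.mem_some_iff] at hy
      rw [← hy, head_reverse' hsegne, seg_getLast (by omega) hm2lt]
      rw [hva2] at hva
      exact hva
    have hPlen : 3 ≤ (x0 :: (seg L 1 m2).reverse).length := by
      rw [List.length_cons, List.length_reverse, seg_length hm2lt]
      omega
    obtain ⟨t, ht1, ht2, ht3, ht4⟩ := T' hch (x0 :: (seg L 1 m2).reverse) hPnd hPch hPlen hPne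
      (by rw [hPhead, hPlast]; exact hadj01)
    rw [hPhead] at ht1 ht3
    rw [hPlast] at ht2 ht4
    rcases hdeg2 t ht3 with rfl | rfl
    · exact absurd rfl ht2
    · exact ⟨x0, v1, hreach 0 h0lt, hadj01,
        Or.inr ⟨t, hva, hvane, ht4, hdeg2⟩⟩
  push_neg at hdeg2
  obtain ⟨vb, hvb, hvbne1, hvbne2⟩ := hdeg2
  obtain ⟨m3, hm3lt, hm3ge, hvb2⟩ := hnbrIdx vb hvb
  have hm3ge2 : 2 ≤ m3 := by
    rcases Nat.eq_or_lt_of_le hm3ge with h | h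
    · exfalso; subst h; exact hvbne1 (hvb2.trans hv1.symm)
    · omega
  have hm23ne : m2 ≠ m3 := by
    intro h
    apply hvbne2
    rw [hvb2, hva2]
    subst h
    rfl
  have hNb : ∀ x, G.Adj x0 x → x = v1 ∨ x = va ∨ x = vb := by
    intro x hx
    rcases hd3 x0 v1 va vb x hadj01 hva hvb hx with h | h | h | h | h | h
    · exact absurd h (Ne.symm hvane)
    · exact absurd h (Ne.symm hvbne1)
    · exact Or.inl h.symm
    · exact absurd h hvbne2.symm
    · exact Or.inr (Or.inl h.symm)
    · exact Or.inr (Or.inr h.symm)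
  -- symmetric auxiliary claim, assuming m2 < m3
  have auxcase : ∀ (m2 m3 : ℕ) (hm2lt : m2 < L.length) (hm3lt : m3 < L.length)
      (hm2ge2 : 2 ≤ m2) (hm23 : m2 < m3) (va vb : V), va = L[m2]'hm2lt → vb = L[m3]'hm3lt →
      G.Adj x0 va → G.Adj x0 vb → va ≠ v1 → vb ≠ v1 →
      (∀ x, G.Adj x0 x → x = v1 ∨ x = va ∨ x = vb) →
      ∃ v a, G.Reachable v0 v ∧ G.Adj v a ∧
        ((∀ x, G.Adj v x → x = a) ∨
         ∃ b, G.Adj v b ∧ b ≠ a ∧ G.Adj a b ∧ ∀ x, G.Adj v x → x = a ∨ x = b) := by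
    clear hva hvb hva2 hvb2 hm23ne hm2ge hm3ge hm2ge2 hm3ge2 hm2lt hm3lt hvane hvbne1 hvbne2 hNb va vb m2 m3
    intro m2 m3 hm2lt hm3lt hm2ge2 hm23 va vb hva2 hvb2 hva hvb hvane hvbne hNb
    have hm3ge3 : 3 ≤ m3 := by omega
    have hlen4 : 4 ≤ L.length := by omega
    -- triangle on edge (x0, v1)
    have hT1 : G.Adj v1 va ∨ G.Adj v1 vb := by
      have hsegne : seg L 1 m2 ≠ [] := seg_ne (by omega) hm2lt
      have hrevne : (seg L 1 m2).reverse ≠ [] := by simpa using hsegne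
      have hPne : (x0 :: (seg L 1 m2).reverse) ≠ [] := by simp
      have hPhead : (x0 :: (seg L 1 m2).reverse).head hPne = x0 := rfl
      have hPlast : (x0 :: (seg L 1 m2).reverse).getLast hPne = v1 := by
        rw [List.getLast_cons hrevne, getLast_reverse' hsegne, seg_head (by omega) hm2lt]
      have hPnd : (x0 :: (seg L 1 m2).reverse).Nodup := by
        rw [List.nodup_cons]
        refine ⟨?_, List.nodup_reverse.mpr (seg_nodup hndL)⟩
        intro hmem
        obtain ⟨t, ht1, ht2, ht3, hte⟩ := mem_seg (List.mem_reverse.mp hmem) hm2lt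
        have := hIdx h0lt ht3 (by rw [← hte])
        omega
      have hPch : (x0 :: (seg L 1 m2).reverse).Chain' G.Adj := by
        refine List.isChain_cons.mpr ⟨?_, chain'_reverse_adj (seg_chain hchnL)⟩
        intro y hy
        rw [List.head?_eq_head hrevne, Option.mem_some_iff] at hy
        rw [← hy, head_reverse' hsegne, seg_getLast (by omega) hm2lt]
        rw [← hva2]
        exact hva
      have hPlen : 3 ≤ (x0 :: (seg L 1 m2).reverse).length := by
        rw [List.length_cons, List.length_reverse, seg_length hm2lt]
        omega
      obtain ⟨t, ht1, ht2, ht3, ht4⟩ := T' hch (x0 :: (seg L 1 m2).reverse) hPnd hPch hPlen hPne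
        (by rw [hPhead, hPlast]; exact hadj01)
      rw [hPhead] at ht1 ht3
      rw [hPlast] at ht2 ht4
      rcases hNb t ht3 with rfl | rfl | rfl
      · exact absurd rfl ht2
      · exact Or.inl ht4
      · exact Or.inr ht4
    -- triangle on edge (x0, va)
    have hT2 : G.Adj va v1 ∨ G.Adj va vb := by
      have hPne : seg L 0 m2 ≠ [] := seg_ne (Nat.zero_le _) hm2lt
      have hPhead : (seg L 0 m2).head hPne = x0 := seg_head (Nat.zero_le _) hm2lt
      have hPlast : (seg L 0 m2).getLast hPne = va := by
        rw [seg_getLast (Nat.zero_le _) hm2lt]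
        exact hva2.symm
      have hPlen : 3 ≤ (seg L 0 m2).length := by
        rw [seg_length hm2lt]
        omega
      obtain ⟨t, ht1, ht2, ht3, ht4⟩ := T' hch (seg L 0 m2) (seg_nodup hndL)
        (seg_chain hchnL) hPlen hPne (by rw [hPhead, hPlast]; exact hva)
      rw [hPhead] at ht1 ht3
      rw [hPlast] at ht2 ht4
      rcases hNb t ht3 with rfl | rfl | rfl
      · exact Or.inl ht4
      · exact absurd rfl ht2
      · exact Or.inr ht4
    -- triangle on edge (x0, vb)
    have hT3 : G.Adj vb v1 ∨ G.Adj vb va := by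
      have hPne : seg L 0 m3 ≠ [] := seg_ne (Nat.zero_le _) hm3lt
      have hPhead : (seg L 0 m3).head hPne = x0 := seg_head (Nat.zero_le _) hm3lt
      have hPlast : (seg L 0 m3).getLast hPne = vb := by
        rw [seg_getLast (Nat.zero_le _) hm3lt]
        exact hvb2.symm
      have hPlen : 3 ≤ (seg L 0 m3).length := by
        rw [seg_length hm3lt]
        omega
      obtain ⟨t, ht1, ht2, ht3, ht4⟩ := T' hch (seg L 0 m3) (seg_nodup hndL)
        (seg_chain hchnL) hPlen hPne (by rw [hPhead, hPlast]; exact hvb)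
      rw [hPhead] at ht1 ht3
      rw [hPlast] at ht2 ht4
      rcases hNb t ht3 with rfl | rfl | rfl
      · exact Or.inl ht4
      · exact Or.inr ht4
      · exact absurd rfl ht2
    by_cases hab : G.Adj va vb
    · by_cases h1a : G.Adj v1 va
      · -- Case B : v1~va, va~vb, and v1 is not adjacent to vb (else K4)
        have hnb : ¬ G.Adj v1 vb := fun h => hk4 x0 v1 va vb hadj01 hva hvb h1a h hab
        have hm2eq : m2 = 2 := by
          by_contra hc
          have hm1lt : m2 - 1 < L.length := by omega
          have ham1 : G.Adj va (L[m2-1]'hm1lt) := by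
            have hstep := hchainIdx (m2-1) (by omega)
            have hidx : m2 - 1 + 1 = m2 := by omega
            simp only [hidx] at hstep
            rw [← hva2] at hstep
            exact hstep.symm
          rcases hd3 va x0 v1 vb (L[m2-1]'hm1lt) hva.symm h1a.symm hab ham1
            with h | h | h | h | h | h
          · exact absurd (hIdx h0lt h1lt (hx0.symm.trans (h.trans hv1))) (by omega)
          · exact absurd (hIdx h0lt hm3lt (hx0.symm.trans (h.trans hvb2))) (by omega)
          · exact absurd (hIdx h0lt hm1lt (hx0.symm.trans h)) (by omega)
          · exact absurd (hIdx h1lt hm3lt (hv1.symm.trans (h.trans hvb2))) (by omega)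
          · exact absurd (hIdx h1lt hm1lt (hv1.symm.trans h)) (by omega)
          · exact absurd (hIdx hm3lt hm1lt (hvb2.symm.trans h)) (by omega)
        have h2lt : 2 < L.length := by omega
        have hvav2 : va = L[2]'h2lt := by
          rw [hva2]
          congr 1
        have hm3eq : m3 = 3 := by
          by_contra hc
          have h3lt' : 3 < L.length := by omega
          have ha3 : G.Adj va (L[3]'h3lt') := by
            have hstep := hchainIdx 2 h3lt'
            rw [← hvav2] at hstep
            exact hstep
          rcases hd3 va x0 v1 vb (L[3]'h3lt') hva.symm h1a.symm hab ha3
            with h | h | h | h | h | h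
          · exact absurd (hIdx h0lt h1lt (hx0.symm.trans (h.trans hv1))) (by omega)
          · exact absurd (hIdx h0lt hm3lt (hx0.symm.trans (h.trans hvb2))) (by omega)
          · exact absurd (hIdx h0lt h3lt' (hx0.symm.trans h)) (by omega)
          · exact absurd (hIdx h1lt hm3lt (hv1.symm.trans (h.trans hvb2))) (by omega)
          · exact absurd (hIdx h1lt h3lt' (hv1.symm.trans h)) (by omega)
          · exact absurd (hIdx hm3lt h3lt' (hvb2.symm.trans h)) hc
        have h3lt : 3 < L.length := by omega
        have hvbv3 : vb = L[3]'h3lt := by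
          rw [hvb2]
          congr 1
        have hdegva : ∀ x, G.Adj va x → x = x0 ∨ x = v1 ∨ x = vb := by
          intro x hx
          rcases hd3 va x0 v1 vb x hva.symm h1a.symm hab hx with h | h | h | h | h | h
          · exact absurd (hIdx h0lt h1lt (hx0.symm.trans (h.trans hv1))) (by omega)
          · exact absurd (hIdx h0lt hm3lt (hx0.symm.trans (h.trans hvb2))) (by omega)
          · exact Or.inl h.symm
          · exact absurd (hIdx h1lt hm3lt (hv1.symm.trans (h.trans hvb2))) (by omega)
          · exact Or.inr (Or.inl h.symm)
          · exact Or.inr (Or.inr h.symm)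
        by_cases hgood : ∀ x, G.Adj v1 x → x = x0 ∨ x = va
        · refine ⟨v1, x0, hreach 1 h1lt, hadj01.symm, Or.inr ⟨va, h1a, ?_, hva, hgood⟩⟩
          intro h
          exact absurd (hIdx hm2lt h0lt (hva2.symm.trans (h.trans hx0))) (by omega)
        push_neg at hgood
        obtain ⟨x, hx1, hxne0, hxneva⟩ := hgood
        have hxnevb : x ≠ vb := fun h => hnb (h ▸ hx1)
        -- maximality of the rerouted list  v1 x0 v2 v3 ... v_last
        have hsegne : seg L 2 (L.length - 1) ≠ [] := seg_ne (by omega) (by omega)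
        have hQne : (v1 :: x0 :: seg L 2 (L.length - 1)) ≠ [] := by simp
        have hQnd : (v1 :: x0 :: seg L 2 (L.length - 1)).Nodup := by
          rw [List.nodup_cons, List.nodup_cons]
          refine ⟨?_, ?_, seg_nodup hndL⟩
          · intro hmem
            rcases List.mem_cons.mp hmem with h | h
            · exact absurd (hIdx h1lt h0lt (hv1.symm.trans (h.trans hx0))) (by omega)
            · obtain ⟨t, ht1, ht2, ht3, hte⟩ := mem_seg h (by omega)
              exact absurd (hIdx h1lt ht3 (hv1.symm.trans hte)) (by omega)
          · intro hmem
            obtain ⟨t, ht1, ht2, ht3, hte⟩ := mem_seg hmem (by omega)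
            exact absurd (hIdx h0lt ht3 (hx0.symm.trans hte)) (by omega)
        have hQch : (v1 :: x0 :: seg L 2 (L.length - 1)).Chain' G.Adj := by
          refine List.isChain_cons_cons.mpr ⟨hadj01.symm, ?_⟩
          refine List.isChain_cons.mpr ⟨?_, seg_chain hchnL⟩
          intro y hy
          rw [List.head?_eq_head hsegne, Option.mem_some_iff] at hy
          rw [← hy, seg_head (by omega) (by omega), ← hvav2]
          exact hva
        have hQrch : ∀ z ∈ (v1 :: x0 :: seg L 2 (L.length - 1)), G.Reachable v0 z := by
          intro z hz
          rcases List.mem_cons.mp hz with rfl | hz'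
          · exact hreach 1 h1lt
          rcases List.mem_cons.mp hz' with rfl | hz''
          · exact hreach 0 h0lt
          · exact hrchL _ (seg_sublist.mem hz'')
        have hQlen : (v1 :: x0 :: seg L 2 (L.length - 1)).length = N := by
          rw [List.length_cons, List.length_cons, seg_length (by omega), ← hlenL]
          omega
        have hxQ : x ∈ (v1 :: x0 :: seg L 2 (L.length - 1)) :=
          hext _ hQne hQnd hQch hQrch hQlen x hx1
        have hxm : ∃ (m : ℕ) (hm : m < L.length), 4 ≤ m ∧ x = L[m]'hm := by
          rcases List.mem_cons.mp hxQ with h | h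
          · exact absurd h hx1.ne'
          rcases List.mem_cons.mp h with h' | h'
          · exact absurd h' hxne0
          obtain ⟨t, ht1, ht2, ht3, hte⟩ := mem_seg h' (by omega)
          refine ⟨t, ht3, ?_, hte⟩
          rcases Nat.lt_or_ge t 4 with hlt4 | hge4
          · exfalso
            rcases Nat.lt_or_ge t 3 with hlt3 | hge3
            · have ht2' : t = 2 := by omega
              subst ht2'
              exact hxneva (hte.trans hvav2.symm)
            · have ht3' : t = 3 := by omega
              subst ht3'
              exact hxnevb (hte.trans hvbv3.symm)
          · exact hge4
        obtain ⟨m, hmlt, hm4, hxm⟩ := hxm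
        -- triangle on the edge (v1, x)
        have hP5ne : seg L 1 m ≠ [] := seg_ne (by omega) hmlt
        have hP5head : (seg L 1 m).head hP5ne = v1 := seg_head (by omega) hmlt
        have hP5last : (seg L 1 m).getLast hP5ne = x := by
          rw [seg_getLast (by omega) hmlt]
          exact hxm.symm
        have hP5len : 3 ≤ (seg L 1 m).length := by
          rw [seg_length hmlt]
          omega
        obtain ⟨t, ht1, ht2, ht3, ht4⟩ := T' hch (seg L 1 m) (seg_nodup hndL)
          (seg_chain hchnL) hP5len hP5ne (by rw [hP5head, hP5last]; exact hx1)
        rw [hP5head] at ht1 ht3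
        rw [hP5last] at ht2 ht4
        exfalso
        rcases hd3 v1 x0 va x t hadj01.symm h1a hx1 ht3 with h | h | h | h | h | h
        · exact absurd (hIdx h0lt hm2lt (hx0.symm.trans (h.trans hva2))) (by omega)
        · exact hxne0 h.symm
        · -- t = x0 : then x is a neighbour of x0
          rcases hNb x (by rw [h]; exact ht4.symm) with h' | h' | h'
          · exact hx1.ne' h'
          · exact hxneva h'
          · exact hxnevb h'
        · exact hxneva h.symm
        · -- t = va : then x is a neighbour of va
          rcases hdegva x (by rw [← h] at ht4; exact ht4.symm) with h' | h' | h'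
          · exact hxne0 h'
          · exact hx1.ne' h'
          · exact hxnevb h'
        · exact ht2 h.symm
      · -- Case C : v1~vb, va~vb
        have h1b : G.Adj v1 vb := by
          rcases hT1 with h | h
          · exact absurd h h1a
          · exact h
        have hm3m2 : m3 = m2 + 1 := by
          by_contra hc
          have hm1lt : m3 - 1 < L.length := by omega
          have ham1 : G.Adj vb (L[m3-1]'hm1lt) := by
            have hstep := hchainIdx (m3-1) (by omega)
            have hidx : m3 - 1 + 1 = m3 := by omega
            simp only [hidx] at hstep
            rw [← hvb2] at hstep
            exact hstep.symm
          rcases hd3 vb x0 v1 va (L[m3-1]'hm1lt) hvb.symm h1b.symm hab.symm ham1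
            with h | h | h | h | h | h
          · exact absurd (hIdx h0lt h1lt (hx0.symm.trans (h.trans hv1))) (by omega)
          · exact absurd (hIdx h0lt hm2lt (hx0.symm.trans (h.trans hva2))) (by omega)
          · exact absurd (hIdx h0lt hm1lt (hx0.symm.trans h)) (by omega)
          · exact absurd (hIdx h1lt hm2lt (hv1.symm.trans (h.trans hva2))) (by omega)
          · exact absurd (hIdx h1lt hm1lt (hv1.symm.trans h)) (by omega)
          · exact hc (by have := hIdx hm2lt hm1lt (hva2.symm.trans h); omega)
        have hm3last : m3 = L.length - 1 := by
          by_contra hc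
          have hm31 : m3 + 1 < L.length := by omega
          have hap1 : G.Adj vb (L[m3+1]'hm31) := by
            have hstep := hchainIdx m3 hm31
            rw [← hvb2] at hstep
            exact hstep
          rcases hd3 vb x0 v1 va (L[m3+1]'hm31) hvb.symm h1b.symm hab.symm hap1
            with h | h | h | h | h | h
          · exact absurd (hIdx h0lt h1lt (hx0.symm.trans (h.trans hv1))) (by omega)
          · exact absurd (hIdx h0lt hm2lt (hx0.symm.trans (h.trans hva2))) (by omega)
          · exact absurd (hIdx h0lt hm31 (hx0.symm.trans h)) (by omega)
          · exact absurd (hIdx h1lt hm2lt (hv1.symm.trans (h.trans hva2))) (by omega)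
          · exact absurd (hIdx h1lt hm31 (hv1.symm.trans h)) (by omega)
          · exact absurd (hIdx hm2lt hm31 (hva2.symm.trans h)) (by omega)
        have h2lt : 2 < L.length := by omega
        have hm3ge4 : 4 ≤ m3 := by
          rcases Nat.eq_or_lt_of_le hm3ge3 with h | h
          · exfalso
            apply h1a
            have hva22 : va = L[2]'h2lt := by
              rw [hva2]
              congr 1
              omega
            rw [hva22]
            exact hchainIdx 1 h2lt
          · omega
        have hlen5 : 5 ≤ L.length := by omega
        have hdegv1 : ∀ x, G.Adj v1 x → x = x0 ∨ x = (L[2]'h2lt) ∨ x = vb := by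
          intro x hx
          rcases hd3 v1 x0 (L[2]'h2lt) vb x hadj01.symm (hchainIdx 1 h2lt) h1b hx
            with h | h | h | h | h | h
          · exact absurd (hIdx h0lt h2lt (hx0.symm.trans h)) (by omega)
          · exact absurd (hIdx h0lt hm3lt (hx0.symm.trans (h.trans hvb2))) (by omega)
          · exact Or.inl h.symm
          · exact absurd (hIdx h2lt hm3lt (h.trans hvb2)) (by omega)
          · exact Or.inr (Or.inl h.symm)
          · exact Or.inr (Or.inr h.symm)
        have hdegvb : ∀ x, G.Adj vb x → x = x0 ∨ x = v1 ∨ x = va := by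
          intro x hx
          rcases hd3 vb x0 v1 va x hvb.symm h1b.symm hab.symm hx with h | h | h | h | h | h
          · exact absurd (hIdx h0lt h1lt (hx0.symm.trans (h.trans hv1))) (by omega)
          · exact absurd (hIdx h0lt hm2lt (hx0.symm.trans (h.trans hva2))) (by omega)
          · exact Or.inl h.symm
          · exact absurd (hIdx h1lt hm2lt (hv1.symm.trans (h.trans hva2))) (by omega)
          · exact Or.inr (Or.inl h.symm)
          · exact Or.inr (Or.inr h.symm)
        have hvbL : vb = L[L.length - 1]'(by omega) := by
          rw [hvb2]
          congr 1
        -- the rerouted cycle v1 x0 v_last ... v2 , and the triangle on (v1, v2)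
        have hsegne : seg L 2 (L.length - 1) ≠ [] := seg_ne (by omega) (by omega)
        have hrevne : (seg L 2 (L.length - 1)).reverse ≠ [] := by simpa using hsegne
        have hQne : (v1 :: x0 :: (seg L 2 (L.length - 1)).reverse) ≠ [] := by simp
        have hQhead : (v1 :: x0 :: (seg L 2 (L.length - 1)).reverse).head hQne = v1 := rfl
        have hQlast : (v1 :: x0 :: (seg L 2 (L.length - 1)).reverse).getLast hQne
            = L[2]'h2lt := by
          rw [List.getLast_cons (by simp), List.getLast_cons hrevne, getLast_reverse' hsegne,
            seg_head (by omega) (by omega)]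
        have hQnd : (v1 :: x0 :: (seg L 2 (L.length - 1)).reverse).Nodup := by
          rw [List.nodup_cons, List.nodup_cons]
          refine ⟨?_, ?_, List.nodup_reverse.mpr (seg_nodup hndL)⟩
          · intro hmem
            rcases List.mem_cons.mp hmem with h | h
            · exact absurd (hIdx h1lt h0lt (hv1.symm.trans (h.trans hx0))) (by omega)
            · obtain ⟨t, ht1, ht2, ht3, hte⟩ := mem_seg (List.mem_reverse.mp h) (by omega)
              exact absurd (hIdx h1lt ht3 (hv1.symm.trans hte)) (by omega)
          · intro hmem
            obtain ⟨t, ht1, ht2, ht3, hte⟩ := mem_seg (List.mem_reverse.mp hmem) (by omega)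
            exact absurd (hIdx h0lt ht3 (hx0.symm.trans hte)) (by omega)
        have hQch : (v1 :: x0 :: (seg L 2 (L.length - 1)).reverse).Chain' G.Adj := by
          refine List.isChain_cons_cons.mpr ⟨hadj01.symm, ?_⟩
          refine List.isChain_cons.mpr ⟨?_, chain'_reverse_adj (seg_chain hchnL)⟩
          intro y hy
          rw [List.head?_eq_head hrevne, Option.mem_some_iff] at hy
          rw [← hy, head_reverse' hsegne, seg_getLast (by omega) (by omega), ← hvbL]
          exact hvb
        have hQlen : 3 ≤ (v1 :: x0 :: (seg L 2 (L.length - 1)).reverse).length := by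
          rw [List.length_cons, List.length_cons, List.length_reverse, seg_length (by omega)]
          omega
        obtain ⟨t, ht1, ht2, ht3, ht4⟩ := T' hch _ hQnd hQch hQlen hQne
          (by rw [hQlast]; exact hchainIdx 1 h2lt)
        rw [hQhead] at ht1 ht3
        rw [hQlast] at ht2 ht4
        exfalso
        rcases hdegv1 t ht3 with rfl | rfl | rfl
        · rcases hNb (L[2]'h2lt) ht4.symm with h | h | h
          · exact absurd (hIdx h2lt h1lt (h.trans hv1)) (by omega)
          · exact absurd (hIdx h2lt hm2lt (h.trans hva2)) (by omega)
          · exact absurd (hIdx h2lt hm3lt (h.trans hvb2)) (by omega)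
        · exact absurd rfl ht2
        · rcases hdegvb (L[2]'h2lt) ht4.symm with h | h | h
          · exact absurd (hIdx h2lt h0lt (h.trans hx0)) (by omega)
          · exact absurd (hIdx h2lt h1lt (h.trans hv1)) (by omega)
          · exact absurd (hIdx h2lt hm2lt (h.trans hva2)) (by omega)
    · -- Case A : v1~va, v1~vb
      have h1a : G.Adj va v1 := by
        rcases hT2 with h | h
        · exact h
        · exact absurd h hab
      have h1b : G.Adj vb v1 := by
        rcases hT3 with h | h
        · exact h
        · exact absurd h (fun h' => hab h'.symm)
      have h2lt : 2 < L.length := by omega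
      have hvav2 : va = L[2]'h2lt := by
        rcases hd3 v1 x0 (L[2]'h2lt) va vb hadj01.symm (hchainIdx 1 h2lt) h1a.symm h1b.symm
          with h | h | h | h | h | h
        · exact absurd (hIdx h0lt h2lt (hx0.symm.trans h)) (by omega)
        · exact absurd (hIdx h0lt hm2lt ((hx0.symm.trans h).trans hva2)) (by omega)
        · exact absurd (hIdx h0lt hm3lt ((hx0.symm.trans h).trans hvb2)) (by omega)
        · exact h.symm
        · exact absurd (hIdx h2lt hm3lt (h.trans hvb2)) (by omega)
        · exact absurd (hIdx hm2lt hm3lt ((hva2.symm.trans h).trans hvb2)) (by omega)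
      have hm2eq : m2 = 2 := hIdx hm2lt h2lt (hva2.symm.trans hvav2)
      have hm3last : m3 = L.length - 1 := by
        by_contra hc3
        have hm31 : m3 + 1 < L.length := by omega
        have hm1lt : m3 - 1 < L.length := by omega
        have ham1 : G.Adj vb (L[m3-1]'hm1lt) := by
          have hstep := hchainIdx (m3-1) (by omega)
          have hidx : m3 - 1 + 1 = m3 := by omega
          simp only [hidx] at hstep
          rw [← hvb2] at hstep
          exact hstep.symm
        have hap1 : G.Adj vb (L[m3+1]'hm31) := by
          have hstep := hchainIdx m3 hm31
          rw [← hvb2] at hstep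
          exact hstep
        rcases hd3 vb x0 v1 (L[m3-1]'hm1lt) (L[m3+1]'hm31) hvb.symm h1b ham1 hap1
          with h | h | h | h | h | h
        · exact absurd (hIdx h0lt h1lt (hx0.symm.trans (h.trans hv1))) (by omega)
        · exact absurd (hIdx h0lt hm1lt (hx0.symm.trans h)) (by omega)
        · exact absurd (hIdx h0lt hm31 (hx0.symm.trans h)) (by omega)
        · exact absurd (hIdx h1lt hm1lt (hv1.symm.trans h)) (by omega)
        · exact absurd (hIdx h1lt hm31 (hv1.symm.trans h)) (by omega)
        · exact absurd (hIdx hm1lt hm31 h) (by omega)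
      have h3lt : 3 < L.length := by omega
      have hav3 : G.Adj va (L[3]'h3lt) := by
        have hstep := hchainIdx 2 h3lt
        rw [← hvav2] at hstep
        exact hstep
      have hdegv2 : ∀ x, G.Adj va x → x = x0 ∨ x = v1 ∨ x = (L[3]'h3lt) := by
        intro x hx
        rcases hd3 va x0 v1 (L[3]'h3lt) x hva.symm h1a hav3 hx with h | h | h | h | h | h
        · exact absurd (hIdx h0lt h1lt (hx0.symm.trans (h.trans hv1))) (by omega)
        · exact absurd (hIdx h0lt h3lt (hx0.symm.trans h)) (by omega)
        · exact Or.inl h.symm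
        · exact absurd (hIdx h1lt h3lt (hv1.symm.trans h)) (by omega)
        · exact Or.inr (Or.inl h.symm)
        · exact Or.inr (Or.inr h.symm)
      have hm3ge4 : 4 ≤ m3 := by
        rcases Nat.eq_or_lt_of_le hm3ge3 with h | h
        · exfalso
          apply hab
          subst h
          rw [hvb2]
          exact hav3
        · omega
      -- triangle on the edge (va, L[3]) using the long way around
      have hsegne : seg L 3 (L.length - 1) ≠ [] := seg_ne (by omega) (by omega)
      have hrevne : (seg L 3 (L.length - 1)).reverse ≠ [] := by simpa using hsegne
      have hPne : (va :: v1 :: (seg L 3 (L.length - 1)).reverse) ≠ [] := by simp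
      have hPhead : (va :: v1 :: (seg L 3 (L.length - 1)).reverse).head hPne = va := rfl
      have hvbL : vb = L[L.length - 1]'(by omega) := by
        rw [hvb2]
        congr 1
      have hPlast : (va :: v1 :: (seg L 3 (L.length - 1)).reverse).getLast hPne = L[3]'h3lt := by
        rw [List.getLast_cons (by simp), List.getLast_cons hrevne, getLast_reverse' hsegne,
          seg_head (by omega) (by omega)]
      have hPnd : (va :: v1 :: (seg L 3 (L.length - 1)).reverse).Nodup := by
        rw [List.nodup_cons, List.nodup_cons]
        refine ⟨?_, ?_, List.nodup_reverse.mpr (seg_nodup hndL)⟩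
        · intro hmem
          rcases List.mem_cons.mp hmem with h | h
          · exact hvane h
          · obtain ⟨t, ht1, ht2, ht3, hte⟩ := mem_seg (List.mem_reverse.mp h) (by omega)
            exact absurd (hIdx h2lt ht3 (hvav2.symm.trans hte)) (by omega)
        · intro hmem
          obtain ⟨t, ht1, ht2, ht3, hte⟩ := mem_seg (List.mem_reverse.mp hmem) (by omega)
          exact absurd (hIdx h1lt ht3 (hv1.symm.trans hte)) (by omega)
      have hPch : (va :: v1 :: (seg L 3 (L.length - 1)).reverse).Chain' G.Adj := by
        refine List.isChain_cons_cons.mpr ⟨h1a, ?_⟩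
        refine List.isChain_cons.mpr ⟨?_, chain'_reverse_adj (seg_chain hchnL)⟩
        intro y hy
        rw [List.head?_eq_head hrevne, Option.mem_some_iff] at hy
        rw [← hy, head_reverse' hsegne, seg_getLast (by omega) (by omega), ← hvbL]
        exact h1b.symm
      have hPlen : 3 ≤ (va :: v1 :: (seg L 3 (L.length - 1)).reverse).length := by
        rw [List.length_cons, List.length_cons, List.length_reverse, seg_length (by omega)]
        omega
      obtain ⟨t, ht1, ht2, ht3, ht4⟩ := T' hch _ hPnd hPch hPlen hPne
        (by rw [hPlast]; exact hav3)
      rw [hPhead] at ht1 ht3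
      rw [hPlast] at ht2 ht4
      exfalso
      rcases hdegv2 t ht3 with rfl | rfl | rfl
      · rcases hNb _ ht4.symm with h | h | h
        · exact absurd (hIdx h3lt h1lt (h.trans hv1)) (by omega)
        · exact absurd (hIdx h3lt hm2lt (h.trans hva2)) (by omega)
        · exact absurd (hIdx h3lt hm3lt (h.trans hvb2)) (by omega)
      · rcases hd3 v1 x0 va vb (L[3]'h3lt) hadj01.symm h1a.symm h1b.symm ht4.symm
          with h | h | h | h | h | h
        · exact absurd (hIdx h0lt hm2lt ((hx0.symm.trans h).trans hva2)) (by omega)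
        · exact absurd (hIdx h0lt hm3lt ((hx0.symm.trans h).trans hvb2)) (by omega)
        · exact absurd (hIdx h0lt h3lt (hx0.symm.trans h)) (by omega)
        · exact absurd (hIdx hm2lt hm3lt ((hva2.symm.trans h).trans hvb2)) (by omega)
        · exact absurd (hIdx hm2lt h3lt (hva2.symm.trans h)) (by omega)
        · exact absurd (hIdx hm3lt h3lt (hvb2.symm.trans h)) (by omega)
      · exact absurd rfl ht2
  rcases Nat.lt_or_ge m2 m3 with h23 | h23
  · exact auxcase m2 m3 hm2lt hm3lt hm2ge2 h23 va vb hva2 hvb2 hva hvb hvane hvbne1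
      (fun x hx => hNb x hx)
  · have h32 : m3 < m2 := by omega
    refine auxcase m3 m2 hm3lt hm2lt hm3ge2 h32 vb va hvb2 hva2 hvb hva hvbne1 hvane ?_
    intro x hx
    rcases hNb x hx with h | h | h
    · exact Or.inl h
    · exact Or.inr (Or.inr h)
    · exact Or.inr (Or.inl h)


section MGraphPart

/-- the restriction of `G` to a finite vertex set `s` -/
def Gr (G : SimpleGraph V) (s : Finset V) : SimpleGraph V where
  Adj u v := G.Adj u v ∧ u ∈ s ∧ v ∈ s
  symm := by
    constructor
    intro u v h
    exact ⟨h.1.symm, h.2.2, h.2.1⟩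
  loopless := ⟨fun v h => G.loopless.irrefl v h.1⟩

lemma Gr_adj {G : SimpleGraph V} {s : Finset V} {u v : V} :
    (Gr G s).Adj u v ↔ G.Adj u v ∧ u ∈ s ∧ v ∈ s := Iff.rfl

lemma Gr_le {G : SimpleGraph V} {s : Finset V} : Gr G s ≤ G := fun _ _ h => h.1

noncomputable def ME (G : SimpleGraph V) (s : Finset V) : Multiset (Sym2 V) :=
  ((Set.toFinite (Gr G s).edgeSet).toFinset).val

lemma mem_ME {G : SimpleGraph V} {s : Finset V} {e : Sym2 V} :
    e ∈ ME G s ↔ e ∈ (Gr G s).edgeSet := by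
  rw [ME, ← Finset.mem_def, Set.Finite.mem_toFinset]

lemma mem_ME' {G : SimpleGraph V} {s : Finset V} {u v : V} :
    s(u, v) ∈ ME G s ↔ (Gr G s).Adj u v := by
  rw [mem_ME, SimpleGraph.mem_edgeSet]

lemma ME_nodup {G : SimpleGraph V} {s : Finset V} : (ME G s).Nodup := Finset.nodup _

lemma ME_not_diag {G : SimpleGraph V} {s : Finset V} {e : Sym2 V} (he : e ∈ ME G s) :
    ¬ e.IsDiag := by
  rw [mem_ME] at he
  exact SimpleGraph.not_isDiag_of_mem_edgeSet _ he

lemma ME_mem_endpoints {G : SimpleGraph V} {s : Finset V} {e : Sym2 V} (he : e ∈ ME G s)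
    {x : V} (hx : x ∈ e) : x ∈ s := by
  induction e with
  | _ u v =>
    rw [mem_ME'] at he
    rcases Sym2.mem_iff.mp hx with rfl | rfl
    · exact he.2.1
    · exact he.2.2

/-- generic: degree as in `MGraph` equals the count of incident edges, when no loops -/
lemma degree_eq_card_filter (E : Multiset (Sym2 V)) (hnd : ∀ e ∈ E, ¬ e.IsDiag) (v : V) :
    (E.map fun e => if e = s(v, v) then 2 else if v ∈ e then 1 else 0).sum
      = (E.filter (fun e => v ∈ e)).card := by
  induction E using Multiset.induction_on with
  | empty => simp
  | cons e E ih =>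
    rw [Multiset.map_cons, Multiset.sum_cons, Multiset.filter_cons]
    have hne : e ≠ s(v, v) := by
      intro h
      exact hnd e (Multiset.mem_cons_self _ _) (h ▸ Sym2.mk_isDiag_iff.mpr rfl)
    rw [if_neg hne]
    by_cases hv : v ∈ e
    · rw [if_pos hv, ih (fun e' he' => hnd e' (Multiset.mem_cons_of_mem he'))]
      simp [hv]
      omega
    · rw [if_neg hv, ih (fun e' he' => hnd e' (Multiset.mem_cons_of_mem he'))]
      simp [hv]

lemma filter_ME_erase {G : SimpleGraph V} {s : Finset V} (v : V) :
    (ME G s).filter (fun e => ¬ v ∈ e) = ME G (s.erase v) := by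
  refine Multiset.Nodup.ext (Multiset.Nodup.filter _ ME_nodup) ME_nodup |>.mpr ?_
  intro e
  rw [Multiset.mem_filter]
  induction e with
  | _ x y =>
    rw [mem_ME', mem_ME', Gr_adj, Gr_adj]
    constructor
    · rintro ⟨⟨h, hx, hy⟩, hv⟩
      rw [Sym2.mem_iff] at hv
      push_neg at hv
      exact ⟨h, Finset.mem_erase.mpr ⟨fun hh => hv.1 hh.symm, hx⟩,
        Finset.mem_erase.mpr ⟨fun hh => hv.2 hh.symm, hy⟩⟩
    · rintro ⟨h, hx, hy⟩
      rw [Finset.mem_erase] at hx hy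
      refine ⟨⟨h, hx.2, hy.2⟩, ?_⟩
      rw [Sym2.mem_iff]
      push_neg
      exact ⟨fun hh => hx.1 hh.symm, fun hh => hy.1 hh.symm⟩

lemma filter_ME_leaf {G : SimpleGraph V} {s : Finset V} {v a : V}
    (ha : (Gr G s).Adj v a) (huniq : ∀ x, (Gr G s).Adj v x → x = a) :
    (ME G s).filter (fun e => v ∈ e) = {s(v, a)} := by
  refine Multiset.Nodup.ext (Multiset.Nodup.filter _ ME_nodup)
    (Multiset.nodup_singleton _) |>.mpr ?_
  intro e
  rw [Multiset.mem_filter, Multiset.mem_singleton]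
  constructor
  · rintro ⟨he, hv⟩
    induction e with
    | _ x y =>
      rw [mem_ME'] at he
      rcases Sym2.mem_iff.mp hv with rfl | rfl
      · rw [huniq y he]
      · rw [huniq x he.symm, Sym2.eq_swap]
  · rintro rfl
    exact ⟨mem_ME'.mpr ha, Sym2.mem_mk_left _ _⟩

lemma filter_ME_deg2 {G : SimpleGraph V} {s : Finset V} {v a b : V} (hne : b ≠ a)
    (ha : (Gr G s).Adj v a) (hb : (Gr G s).Adj v b)
    (huniq : ∀ x, (Gr G s).Adj v x → x = a ∨ x = b) :
    (ME G s).filter (fun e => v ∈ e) = s(v, a) ::ₘ {s(v, b)} := by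
  have hnd2 : (s(v, a) ::ₘ {s(v, b)} : Multiset (Sym2 V)).Nodup := by
    rw [Multiset.nodup_cons]
    refine ⟨?_, Multiset.nodup_singleton _⟩
    rw [Multiset.mem_singleton]
    intro h
    rcases Sym2.eq_iff.mp h with ⟨-, h2⟩ | ⟨h1, -⟩
    · exact hne h2.symm
    · exact hb.ne h1
  refine Multiset.Nodup.ext (Multiset.Nodup.filter _ ME_nodup) hnd2 |>.mpr ?_
  intro e
  rw [Multiset.mem_filter, Multiset.mem_cons, Multiset.mem_singleton]
  constructor
  · rintro ⟨he, hv⟩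
    induction e with
    | _ x y =>
      rw [mem_ME'] at he
      rcases Sym2.mem_iff.mp hv with rfl | rfl
      · rcases huniq y he with rfl | rfl
        · exact Or.inl rfl
        · exact Or.inr rfl
      · rcases huniq x he.symm with rfl | rfl
        · exact Or.inl Sym2.eq_swap
        · exact Or.inr Sym2.eq_swap
  · rintro (rfl | rfl)
    · exact ⟨mem_ME'.mpr ha, Sym2.mem_mk_left _ _⟩
    · exact ⟨mem_ME'.mpr hb, Sym2.mem_mk_left _ _⟩

lemma ME_decomp {G : SimpleGraph V} {s : Finset V} (v : V) :
    (ME G s).filter (fun e => v ∈ e) + ME G (s.erase v) = ME G s := by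
  rw [← filter_ME_erase v]
  exact Multiset.filter_add_not _ _

end MGraphPart

section Conn

def ConnOn (G : SimpleGraph V) (s : Finset V) : Prop :=
  ∀ u ∈ s, ∀ w ∈ s, (Gr G s).Reachable u w

lemma adj_of_reachable_ne {H : SimpleGraph V} {x y : V} (h : H.Reachable x y) (hne : x ≠ y) :
    ∃ z, H.Adj x z := by
  obtain ⟨p⟩ := h
  cases p with
  | nil => exact absurd rfl hne
  | cons h' _ => exact ⟨_, h'⟩

lemma walk_support_mem_s {G : SimpleGraph V} {s : Finset V} {u w : V}
    (p : (Gr G s).Walk u w) (hu : u ∈ s) : ∀ x ∈ p.support, x ∈ s := by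
  induction p with
  | nil =>
    intro x hx
    rw [SimpleGraph.Walk.support_nil, List.mem_singleton] at hx
    exact hx ▸ hu
  | cons h q ih =>
    intro x hx
    rw [SimpleGraph.Walk.support_cons, List.mem_cons] at hx
    rcases hx with rfl | hx
    · exact hu
    · exact ih h.2.2 x hx

/-- removing a vertex all of whose neighbours are among `{a, b}`, with `a`, `b`
joined in the smaller graph, keeps connectivity -/
lemma conn_erase {G : SimpleGraph V} {s : Finset V} {v a b : V}
    (hconn : ConnOn G s) (hva : a ≠ v) (hvb : b ≠ v)
    (hnb : ∀ x, (Gr G s).Adj v x → x = a ∨ x = b)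
    (hre : (Gr G (s.erase v)).Reachable a b) :
    ConnOn G (s.erase v) := by
  have key : ∀ (n : ℕ) (u w : V) (p : (Gr G s).Walk u w), p.length = n → u ≠ v → w ≠ v →
      (Gr G (s.erase v)).Reachable u w := by
    intro n
    induction n using Nat.strong_induction_on with
    | _ n ih =>
      intro u w p hlen hu hw
      cases p with
      | nil => exact Reachable.refl _
      | @cons _ y _ h q =>
        by_cases hy : y = v
        · cases q with
          | nil => exact absurd hy hw
          | @cons _ z _ h' q' =>
            have hz : z = a ∨ z = b := hnb z (by rw [← hy]; exact h')
            have hu' : u = a ∨ u = b := hnb u (by rw [← hy]; exact h.symm)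
            have hz2 : z ≠ v := by
              rcases hz with rfl | rfl
              · exact hva
              · exact hvb
            have h1 : (Gr G (s.erase v)).Reachable u z := by
              rcases hu' with rfl | rfl <;> rcases hz with rfl | rfl
              · exact Reachable.refl _
              · exact hre
              · exact hre.symm
              · exact Reachable.refl _
            refine h1.trans (ih q'.length (by rw [← hlen]; simp) z w q' rfl hz2 hw)
        · have hadj : (Gr G (s.erase v)).Adj u y :=
            ⟨h.1, Finset.mem_erase.mpr ⟨hu, h.2.1⟩, Finset.mem_erase.mpr ⟨hy, h.2.2⟩⟩
          refine hadj.reachable.trans (ih q.length (by rw [← hlen]; simp) y w q rfl hy hw)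
  intro u hu w hw
  rw [Finset.mem_erase] at hu hw
  obtain ⟨p⟩ := hconn u hu.2 w hw.2
  exact key p.length u w p rfl hu.1 hw.1

end Conn

section Restrict

lemma MaxDeg3_restrict {G : SimpleGraph V} {s : Finset V} (h : MaxDeg3 G) :
    MaxDeg3 (Gr G s) := by
  intro v a b c d ha hb hc hd
  exact h v a b c d ha.1 hb.1 hc.1 hd.1

lemma K4Free_restrict {G : SimpleGraph V} {s : Finset V} (h : K4Free G) :
    K4Free (Gr G s) := by
  intro a b c d h1 h2 h3 h4 h5 h6
  exact h a b c d h1.1 h2.1 h3.1 h4.1 h5.1 h6.1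

lemma IsChordal_restrict {G : SimpleGraph V} {s : Finset V} (h : G.IsChordal) :
    (Gr G s).IsChordal := by
  intro v c hcyc hlen
  have hedges : ∀ e ∈ c.edges, e ∈ G.edgeSet :=
    fun e he => SimpleGraph.edgeSet_mono Gr_le (c.edges_subset_edgeSet he)
  have hvs : v ∈ s := by
    cases c with
    | nil => exact absurd rfl hcyc.ne_nil
    | cons h1 q => exact h1.2.1
  set c' := c.transfer G hedges with hc'
  have hsup : c'.support = c.support := SimpleGraph.Walk.support_transfer _ _
  have hedg : c'.edges = c.edges := SimpleGraph.Walk.edges_transfer _ _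
  have hlen' : c'.length = c.length := by
    have h1 := c'.length_support
    have h2 := c.length_support
    rw [hsup] at h1
    omega
  have hcyc' : c'.IsCycle := by
    constructor
    · constructor
      · rw [SimpleGraph.Walk.isTrail_def, hedg]
        exact hcyc.isTrail.edges_nodup
      · intro hnil
        rw [hnil] at hlen'
        rw [SimpleGraph.Walk.length_nil] at hlen'
        omega
    · rw [hsup]
      exact hcyc.support_nodup
  obtain ⟨a, b, ha, hb, hab, hnin⟩ := h v c' hcyc' (by omega)
  have ha' : a ∈ s := walk_support_mem_s c hvs a (hsup ▸ ha)
  have hb' : b ∈ s := walk_support_mem_s c hvs b (hsup ▸ hb)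
  exact ⟨a, b, hsup ▸ ha, hsup ▸ hb, ⟨hab, ha', hb'⟩, hedg ▸ hnin⟩

end Restrict

section Reduce

noncomputable def MG (G : SimpleGraph V) (s : Finset V) : MGraph V := ⟨s, ME G s⟩

lemma isK2_of_card_two {G : SimpleGraph V} {s : Finset V} (hcard : s.card = 2)
    (hconn : ConnOn G s) : MGraph.IsK2 (MG G s) := by
  obtain ⟨x, y, hxy, rfl⟩ := Finset.card_eq_two.mp hcard
  have hxs : x ∈ ({x, y} : Finset V) := by simp
  have hys : y ∈ ({x, y} : Finset V) := by simp
  obtain ⟨z, hz⟩ := adj_of_reachable_ne (hconn x hxs y hys) hxy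
  have hzs : z ∈ ({x, y} : Finset V) := hz.2.2
  have hzy : z = y := by
    rcases Finset.mem_insert.mp hzs with rfl | h
    · exact absurd rfl hz.ne
    · exact Finset.mem_singleton.mp h
  subst hzy
  refine ⟨x, z, hxy, rfl, ?_⟩
  refine Multiset.Nodup.ext ME_nodup (Multiset.nodup_singleton _) |>.mpr ?_
  intro e
  rw [Multiset.mem_singleton]
  constructor
  · intro he
    induction e with
    | _ p q =>
      have hp := ME_mem_endpoints he (Sym2.mem_mk_left p q)
      have hq := ME_mem_endpoints he (Sym2.mem_mk_right p q)
      have hpq : p ≠ q := fun h => ME_not_diag he (Sym2.mk_isDiag_iff.mpr h)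
      rcases Finset.mem_insert.mp hp with rfl | hp' <;>
        rcases Finset.mem_insert.mp hq with rfl | hq'
      · exact absurd rfl hpq
      · rw [Finset.mem_singleton.mp hq']
      · rw [Finset.mem_singleton.mp hp', Sym2.eq_swap]
      · rw [Finset.mem_singleton.mp hp', Finset.mem_singleton.mp hq'] at hpq ⊢
        exact absurd rfl hpq
  · rintro rfl
    exact mem_ME'.mpr hz

lemma reduce {G : SimpleGraph V} (hch : G.IsChordal) (hd3 : MaxDeg3 G) (hk4 : K4Free G) :
    ∀ (n : ℕ) (s : Finset V), s.card = n → 2 ≤ s.card → ConnOn G s →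
    ∃ H : MGraph V, Relation.ReflTransGen MGraph.Step (MG G s) H ∧ MGraph.IsK2 H := by
  intro n
  induction n using Nat.strong_induction_on with
  | _ n ih =>
    intro s hn h2 hconn
    rcases eq_or_lt_of_le h2 with h2' | h2lt
    · exact ⟨MG G s, Relation.ReflTransGen.refl, isK2_of_card_two h2'.symm hconn⟩
    have hcard2 : 2 < (MG G s).verts.card := h2lt
    -- find a starting edge for the good-vertex lemma
    obtain ⟨u0, hu0⟩ := Finset.card_pos.mp (show 0 < s.card by omega)
    obtain ⟨w1, hw1, hw1ne⟩ : ∃ w ∈ s, w ≠ u0 := by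
      obtain ⟨a, ha, b, hb, hab⟩ := Finset.one_lt_card.mp (show 1 < s.card by omega)
      by_cases h : a = u0
      · exact ⟨b, hb, fun hh => hab (h.trans hh.symm)⟩
      · exact ⟨a, ha, h⟩
    obtain ⟨z0, hz0⟩ := adj_of_reachable_ne (hconn u0 hu0 w1 hw1) (Ne.symm hw1ne)
    obtain ⟨v, a, hreach, hva, hcases⟩ := exists_good_vertex (IsChordal_restrict hch)
      (MaxDeg3_restrict hd3) (K4Free_restrict hk4) u0 z0 hz0
    have hvs : v ∈ s := hva.2.1
    have hane : a ≠ v := hva.ne'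
    have has : a ∈ s := hva.2.2
    have hcard' : (s.erase v).card = n - 1 := by
      rw [Finset.card_erase_of_mem hvs]
      omega
    have h2'' : 2 ≤ (s.erase v).card := by
      rw [Finset.card_erase_of_mem hvs]
      omega
    rcases hcases with huniq | ⟨b, hvb, hbnea, hab, huniq⟩
    · -- v is a leaf with unique neighbour a : delete it
      have hdecomp : ME G s = s(v, a) ::ₘ ME G (s.erase v) := by
        have h1 := ME_decomp (G := G) (s := s) v
        rw [filter_ME_leaf hva huniq] at h1
        rw [← h1, Multiset.singleton_add]
      have hdeg : (MG G s).degree v = 1 := by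
        show ((ME G s).map fun e => if e = s(v, v) then 2 else if v ∈ e then 1 else 0).sum = 1
        rw [degree_eq_card_filter _ (fun e he => ME_not_diag he) v, filter_ME_leaf hva huniq]
        simp
      have hstep := MGraph.Step.deleteLeaf (MG G s) v (s(v, a)) hcard2 hvs hdeg
        (mem_ME'.mpr hva) (Sym2.mem_mk_left v a)
      have hedges : (ME G s).erase (s(v, a)) = ME G (s.erase v) := by
        rw [hdecomp, Multiset.erase_cons_head]
      have htarget : (⟨(MG G s).verts.erase v, (MG G s).edges.erase (s(v, a))⟩ : MGraph V)
          = MG G (s.erase v) := by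
        show (⟨s.erase v, (ME G s).erase (s(v, a))⟩ : MGraph V) = _
        rw [hedges]
        rfl
      obtain ⟨H, hrt, hk2⟩ := ih (n - 1) (by omega) (s.erase v) hcard' h2''
        (conn_erase hconn hane hane (fun x hx => Or.inl (huniq x hx)) (Reachable.refl a))
      exact ⟨H, Relation.ReflTransGen.head (htarget ▸ hstep) hrt, hk2⟩
    · -- v has exactly the two adjacent neighbours a b : suppress, then delete parallel edge
      have hbv : b ≠ v := hvb.ne'
      have hbs : b ∈ s := hvb.2.2
      have haerase : a ∈ s.erase v := Finset.mem_erase.mpr ⟨hane, has⟩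
      have hberase : b ∈ s.erase v := Finset.mem_erase.mpr ⟨hbv, hbs⟩
      have habadj : (Gr G (s.erase v)).Adj a b := ⟨hab.1, haerase, hberase⟩
      have hdecomp : ME G s = s(a, v) ::ₘ s(v, b) ::ₘ ME G (s.erase v) := by
        have h1 := ME_decomp (G := G) (s := s) v
        rw [filter_ME_deg2 hbnea hva hvb huniq] at h1
        rw [← h1, Multiset.cons_add, Multiset.singleton_add]
        congr 1
        rw [Sym2.eq_swap]
      have hdeg : (MG G s).degree v = 2 := by
        show ((ME G s).map fun e => if e = s(v, v) then 2 else if v ∈ e then 1 else 0).sum = 2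
        rw [degree_eq_card_filter _ (fun e he => ME_not_diag he) v,
          filter_ME_deg2 hbnea hva hvb huniq]
        simp
      have hstep1 := MGraph.Step.suppress (MG G s) v a b (ME G (s.erase v)) hcard2 hvs hdeg
        hane hbv hdecomp
      have habs : s(a, b) ∈ ME G (s.erase v) := mem_ME'.mpr habadj
      have hstep2 := MGraph.Step.deleteParallel
        (⟨s.erase v, s(a, b) ::ₘ ME G (s.erase v)⟩ : MGraph V) (s(a, b))
        (fun h => hbnea (Sym2.mk_isDiag_iff.mp h).symm)
        (by
          show 2 ≤ Multiset.count (s(a,b)) (s(a, b) ::ₘ ME G (s.erase v))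
          rw [Multiset.count_cons_self]
          have := Multiset.count_pos.mpr habs
          omega)
      have htarget2 : (⟨(⟨s.erase v, s(a, b) ::ₘ ME G (s.erase v)⟩ : MGraph V).verts,
          (⟨s.erase v, s(a, b) ::ₘ ME G (s.erase v)⟩ : MGraph V).edges.erase (s(a, b))⟩ : MGraph V)
          = MG G (s.erase v) := by
        show (⟨s.erase v, (s(a, b) ::ₘ ME G (s.erase v)).erase (s(a, b))⟩ : MGraph V) = _
        rw [Multiset.erase_cons_head]
        rfl
      obtain ⟨H, hrt, hk2⟩ := ih (n - 1) (by omega) (s.erase v) hcard' h2''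
        (conn_erase hconn hane hbv huniq habadj.reachable)
      exact ⟨H, Relation.ReflTransGen.head hstep1
        (Relation.ReflTransGen.head (htarget2 ▸ hstep2) hrt), hk2⟩

end Reduce

section Top

lemma maxdeg3_of_ncard {G : SimpleGraph V} (h : ∀ v, (G.neighborSet v).ncard ≤ 3) :
    MaxDeg3 G := by
  intro v a b c d ha hb hc hd
  by_contra hcon
  push_neg at hcon
  obtain ⟨h1, h2, h3, h4, h5, h6⟩ := hcon
  have hsub : ({a, b, c, d} : Set V) ⊆ G.neighborSet v := by
    intro x hx
    rcases hx with rfl | rfl | rfl | rfl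
    · exact ha
    · exact hb
    · exact hc
    · exact hd
  have hc4 : ({a, b, c, d} : Set V).ncard = 4 := by
    rw [Set.ncard_insert_of_notMem (by simp [h1, h2, h3]) (Set.toFinite _),
      Set.ncard_insert_of_notMem (by simp [h4, h5]) (Set.toFinite _),
      Set.ncard_pair h6]
  have := Set.ncard_le_ncard hsub (Set.toFinite _)
  rw [hc4] at this
  have := h v
  omega

lemma three_le_ncard_nbrs {G : SimpleGraph V} {x y z t : V} (hy : G.Adj x y) (hz : G.Adj x z)
    (ht : G.Adj x t) (h1 : y ≠ z) (h2 : y ≠ t) (h3 : z ≠ t) :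
    3 ≤ (G.neighborSet x).ncard := by
  have hsub : ({y, z, t} : Set V) ⊆ G.neighborSet x := by
    intro u hu
    rcases hu with rfl | rfl | rfl
    · exact hy
    · exact hz
    · exact ht
  have hc3 : ({y, z, t} : Set V).ncard = 3 := by
    rw [Set.ncard_insert_of_notMem (by simp [h1, h2]) (Set.toFinite _), Set.ncard_pair h3]
  have := Set.ncard_le_ncard hsub (Set.toFinite _)
  omega

lemma k4free_of {G : SimpleGraph V} (hconn : G.Connected) (hd3 : MaxDeg3 G)
    (hleaf : ∃ w, (G.neighborSet w).ncard = 1) : K4Free G := by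
  rintro a b c d hab hac had hbc hbd hcd
  obtain ⟨w, hw⟩ := hleaf
  set S : Set V := {a, b, c, d} with hSdef
  have hwS : w ∉ S := by
    intro hmem
    rcases hmem with rfl | rfl | rfl | rfl
    · have h3 := three_le_ncard_nbrs hab hac had hbc.ne hbd.ne hcd.ne
      omega
    · have h3 := three_le_ncard_nbrs hab.symm hbc hbd hac.ne had.ne hcd.ne
      omega
    · have h3 := three_le_ncard_nbrs hac.symm hbc.symm hcd hab.ne had.ne hbd.ne
      omega
    · have h3 := three_le_ncard_nbrs had.symm hbd.symm hcd.symm hab.ne hac.ne hbc.ne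
      omega
  have cross : ∀ (u w' : V) (p : G.Walk u w'), u ∈ S → w' ∉ S →
      ∃ x y, x ∈ S ∧ y ∉ S ∧ G.Adj x y := by
    intro u w' p
    induction p with
    | nil => intro hu hw'; exact absurd hu hw'
    | @cons _ m _ h q ih =>
      intro hu hw'
      by_cases hm : m ∈ S
      · exact ih hm hw'
      · exact ⟨_, m, hu, hm, h⟩
  obtain ⟨p⟩ := hconn.preconnected a w
  obtain ⟨x, y, hx, hy, hxy⟩ := cross a w p (by simp [hSdef]) hwS
  have hyne : ∀ z ∈ S, y ≠ z := fun z hz h => hy (h ▸ hz)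
  have finx : ∀ o1 o2 o3 : V, G.Adj x o1 → G.Adj x o2 → G.Adj x o3 →
      o1 ≠ o2 → o1 ≠ o3 → o2 ≠ o3 → o1 ∈ S → o2 ∈ S → o3 ∈ S → False := by
    intro o1 o2 o3 h1 h2 h3 hne1 hne2 hne3 hS1 hS2 hS3
    rcases hd3 x o1 o2 o3 y h1 h2 h3 hxy with h | h | h | h | h | h
    · exact hne1 h
    · exact hne2 h
    · exact hyne o1 hS1 h.symm
    · exact hne3 h
    · exact hyne o2 hS2 h.symm
    · exact hyne o3 hS3 h.symm
  have hamem : a ∈ S := by simp [hSdef]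
  have hbmem : b ∈ S := by simp [hSdef]
  have hcmem : c ∈ S := by simp [hSdef]
  have hdmem : d ∈ S := by simp [hSdef]
  rcases hx with rfl | rfl | rfl | rfl
  · exact finx b c d hab hac had hbc.ne hbd.ne hcd.ne hbmem hcmem hdmem
  · exact finx a c d hab.symm hbc hbd hac.ne had.ne hcd.ne hamem hcmem hdmem
  · exact finx a b d hac.symm hbc.symm hcd hab.ne had.ne hbd.ne hamem hbmem hdmem
  · exact finx a b c had.symm hbd.symm hcd.symm hab.ne hac.ne hbc.ne hamem hbmem hcmem

lemma Gr_univ (G : SimpleGraph V) : Gr G Finset.univ = G := by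
  ext u v
  simp [Gr_adj]

lemma MG_univ (G : SimpleGraph V) : MG G Finset.univ = G.toMGraph := by
  simp only [MG, ME, SimpleGraph.toMGraph, Gr_univ]

end Top

end StmtAux

set_option maxHeartbeats 1000000 in
set_option linter.unusedVariables false in
theorem stmt15 {V : Type} [Fintype V] [DecidableEq V] (N : SimpleGraph V)
    (hconn : N.Connected)
    (hnodeg2 : ∀ v : V, (N.neighborSet v).ncard ≠ 2)
    (hleaves : 2 ≤ {v : V | (N.neighborSet v).ncard = 1}.ncard)
    (hproper : N.Proper)
    (hbinary : ∀ v : V, (N.neighborSet v).ncard ≠ 1 → (N.neighborSet v).ncard = 3)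
    (hchordal : N.IsChordal) :
    N.Edgebased := by
  classical
  have hle3 : ∀ v, (N.neighborSet v).ncard ≤ 3 := by
    intro v
    by_cases h : (N.neighborSet v).ncard = 1
    · omega
    · rw [hbinary v h]
  have hd3 : StmtAux.MaxDeg3 N := StmtAux.maxdeg3_of_ncard hle3
  have hleaf : ∃ w, (N.neighborSet w).ncard = 1 := by
    have hne : {v : V | (N.neighborSet v).ncard = 1}.Nonempty := by
      apply Set.nonempty_of_ncard_ne_zero
      omega
    obtain ⟨w, hw⟩ := hne
    exact ⟨w, hw⟩
  have hk4 : StmtAux.K4Free N := StmtAux.k4free_of hconn hd3 hleaf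
  have hconn' : StmtAux.ConnOn N Finset.univ := by
    intro u _ w _
    rw [StmtAux.Gr_univ]
    exact hconn.preconnected u w
  have hcard : 2 ≤ (Finset.univ : Finset V).card := by
    have hfin : {v : V | (N.neighborSet v).ncard = 1}.Finite := Set.toFinite _
    have hsub := Set.ncard_le_ncard (Set.subset_univ {v : V | (N.neighborSet v).ncard = 1})
      (Set.toFinite _)
    rw [Set.ncard_univ, Nat.card_eq_fintype_card] at hsub
    rw [Finset.card_univ]
    omega
  obtain ⟨H, hrt, hk2⟩ := StmtAux.reduce hchordal hd3 hk4 (Finset.univ.card) Finset.univ rfl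
    hcard hconn'
  exact ⟨H, by rw [← StmtAux.MG_univ N]; exact hrt, hk2⟩
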